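/- Let S be a string of length n. Then P[1] = 0, and for every i with 1 < i ≤ n, P[i] = P[i−1] + OC[i]; that is, P[i] − P[i−1] = 1 if S[1..i] is closed and P[i] − P[i−1] = 0 otherwise. -/

import Mathlib

variable {α : Type*}

/-- `β` is a border of `S`: a proper (possibly empty) prefix that is also a suffix. -/
def IsBorder (β S : List α) : Prop :=
  β ≠ S ∧ β <+: S ∧ β <:+ S

/-- `v` occurs in `T` at (0-based) position `p`. -/
def OccursAt (v T : List α) (p : ℕ) : Prop :=
  p + v.length ≤ T.length ∧ v <+: T.drop p

/-- A string is closed if it has length 1 or it has a border with no internal occurrence. -/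
def IsClosedWord (S : List α) : Prop :=
  S.length = 1 ∨ ∃ β, IsBorder β S ∧
    ∀ p, OccursAt β S p → p = 0 ∨ p = S.length - β.length

open Classical in
/-- `OCval S i = 1` if the prefix `S[1..i]` is closed, and `0` otherwise. -/
noncomputable def OCval (S : List α) (i : ℕ) : ℕ :=
  if IsClosedWord (S.take i) then 1 else 0

/-- `Parr S i` is the length of the longest prefix of `S[1..i]` having at least
two (possibly overlapping) occurrences in `S[1..i]`. -/
noncomputable def Parr (S : List α) (i : ℕ) : ℕ :=
  sSup {ℓ | ∃ p q : ℕ, p < q ∧ OccursAt (S.take ℓ) (S.take i) p ∧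
    OccursAt (S.take ℓ) (S.take i) q}

/-- `Barr S i` is the length of the longest border of `S[1..i]`. -/
noncomputable def Barr (S : List α) (i : ℕ) : ℕ :=
  sSup {ℓ | IsBorder (S.take ℓ) (S.take i)}

/-- `Bord S i` is the set of lengths of borders of `S[1..i]`. -/
def Bord (S : List α) (i : ℕ) : Set ℕ :=
  {ℓ | IsBorder (S.take ℓ) (S.take i)}

/-- The substring `S[i..j]` (1-based, inclusive). -/
def Substr (S : List α) (i j : ℕ) : List α :=
  (S.take j).drop (i - 1)

/-- `S[i..j]` is a maximal closed substring of `S`. -/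
def IsMCS (S : List α) (i j : ℕ) : Prop :=
  1 ≤ i ∧ i ≤ j ∧ j ≤ S.length ∧ IsClosedWord (Substr S i j) ∧
    (j = S.length ∨ ¬ IsClosedWord (Substr S i (j + 1))) ∧
    (i = 1 ∨ ¬ IsClosedWord (Substr S (i - 1) j))

open Classical in
/-- Number of maximal blocks of consecutive `1`s in the OC array of `S`. -/
noncomputable def ocRuns (S : List α) : ℕ :=
  ((Finset.Icc 1 S.length).filter
    (fun i => OCval S i = 1 ∧ (i = 1 ∨ OCval S (i - 1) = 0))).card

/-- The OC array of `S` as a list (1-based entries). -/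
noncomputable def ocList (S : List α) : List ℕ :=
  (List.range S.length).map (fun j => OCval S (j + 1))

section Aux
variable {α : Type*}

def Pset (S : List α) (i : ℕ) : Set ℕ :=
  {ℓ | ∃ p q : ℕ, p < q ∧ OccursAt (S.take ℓ) (S.take i) p ∧
    OccursAt (S.take ℓ) (S.take i) q}

lemma Parr_eq_sSup (S : List α) (i : ℕ) : Parr S i = sSup (Pset S i) := rfl

lemma Pset_mem_lt {S : List α} {i ℓ : ℕ} (hi : i ≤ S.length) (h : ℓ ∈ Pset S i) :
    ℓ < i := by
  obtain ⟨p, q, hpq, _, hq⟩ := h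
  have h1 := hq.1
  rw [List.length_take, List.length_take] at h1
  omega

lemma Pset_zero_mem {S : List α} {i : ℕ} (hi : 1 ≤ i) (hn : 1 ≤ S.length) :
    0 ∈ Pset S i := by
  refine ⟨0, 1, Nat.zero_lt_one, ?_, ?_⟩ <;>
    exact ⟨by rw [List.length_take, List.length_take]; omega, by simp⟩

lemma occ_mono' {S v : List α} {j k p : ℕ} (hjk : j ≤ k)
    (h : OccursAt v (S.take j) p) : OccursAt v (S.take k) p := by
  obtain ⟨h1, h2⟩ := h
  have hpre : S.take j <+: S.take k := List.take_prefix_take_left hjk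
  exact ⟨h1.trans hpre.length_le, h2.trans (hpre.drop p)⟩

lemma occ_shrink' {S v : List α} {j k p : ℕ} (hjk : j ≤ k)
    (h : OccursAt v (S.take k) p) (hlen : p + v.length ≤ (S.take j).length) :
    OccursAt v (S.take j) p := by
  obtain ⟨_, h2⟩ := h
  refine ⟨hlen, ?_⟩
  have hpre : (S.take j).drop p <+: (S.take k).drop p :=
    (List.take_prefix_take_left hjk).drop p
  refine List.prefix_of_prefix_length_le h2 hpre ?_
  rw [List.length_drop]
  omega

lemma occ_prefix' {T v w : List α} {p : ℕ} (hw : w <+: v) (h : OccursAt v T p) :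
    OccursAt w T p :=
  ⟨le_trans (by have := hw.length_le; omega) h.1, hw.trans h.2⟩

lemma Pset_bdd {S : List α} {i : ℕ} (hi : i ≤ S.length) : BddAbove (Pset S i) :=
  ⟨i, fun _ h => (Pset_mem_lt hi h).le⟩

end Aux

/-- `P[1] = 0` and for `1 < i ≤ n`, `P[i] = P[i−1] + OC[i]`. -/
theorem statement_2 {α : Type*} (S : List α) (hn : 1 ≤ S.length) :
    Parr S 1 = 0 ∧
    ∀ i : ℕ, 1 < i → i ≤ S.length → Parr S i = Parr S (i - 1) + OCval S i := by
  constructor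
  · rw [Parr_eq_sSup]
    refine le_antisymm (csSup_le ⟨0, Pset_zero_mem le_rfl hn⟩ fun ℓ hℓ => ?_)
      (le_csSup (Pset_bdd hn) (Pset_zero_mem le_rfl hn))
    have := Pset_mem_lt hn hℓ
    omega
  · intro i h1 h2
    have hi1 : 1 ≤ i - 1 := by omega
    have hi1n : i - 1 ≤ S.length := by omega
    rw [Parr_eq_sSup, Parr_eq_sSup]
    set m := sSup (Pset S (i - 1)) with hm
    set L := sSup (Pset S i) with hL
    have hne' : (Pset S (i - 1)).Nonempty := ⟨0, Pset_zero_mem hi1 hn⟩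
    have hne : (Pset S i).Nonempty := ⟨0, Pset_zero_mem (by omega) hn⟩
    have hm_mem : m ∈ Pset S (i - 1) := Nat.sSup_mem hne' (Pset_bdd hi1n)
    have hL_mem : L ∈ Pset S i := Nat.sSup_mem hne (Pset_bdd h2)
    have hm_lt : m < i - 1 := Pset_mem_lt hi1n hm_mem
    have hL_lt : L < i := Pset_mem_lt h2 hL_mem
    have hlenT : (S.take i).length = i := by rw [List.length_take]; omega
    have hlen : ∀ ℓ : ℕ, ℓ ≤ S.length → (S.take ℓ).length = ℓ := by
      intro ℓ hℓ; rw [List.length_take]; omega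
    have hmono : m ≤ L := by
      refine le_csSup (Pset_bdd h2) ?_
      obtain ⟨p, q, hpq, hp, hq⟩ := hm_mem
      exact ⟨p, q, hpq, occ_mono' (by omega) hp, occ_mono' (by omega) hq⟩
    have hupper : L ≤ m + 1 := by
      rcases Nat.eq_zero_or_pos L with h0 | hLpos
      · omega
      obtain ⟨p, q, hpq, hp, hq⟩ := hL_mem
      have hq1 : q + L ≤ i := by
        have := hq.1; rw [hlen L (by omega), hlenT] at this; exact this
      have hmem : L - 1 ∈ Pset S (i - 1) := by
        have hpre : S.take (L - 1) <+: S.take L :=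
          List.take_prefix_take_left (by omega)
        refine ⟨p, q, hpq,
          occ_shrink' (k := i) (by omega) (occ_prefix' hpre hp) ?_,
          occ_shrink' (k := i) (by omega) (occ_prefix' hpre hq) ?_⟩ <;>
        · rw [hlen (L - 1) (by omega), hlen (i - 1) (by omega)]
          omega
      have := le_csSup (Pset_bdd hi1n) hmem
      omega
    by_cases hcl : IsClosedWord (S.take i)
    · have hOC : OCval S i = 1 := by rw [OCval, if_pos hcl]
      rw [hOC]
      rcases hcl with hone | ⟨β, ⟨hnee, hpre, hsuf⟩, hno⟩
      · rw [hlenT] at hone; omega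
      set b := β.length with hb
      have hble : b ≤ i := by have := hpre.length_le; rw [hlenT] at this; exact this
      have hblt : b < i := by
        rcases Nat.lt_or_ge b i with h | h
        · exact h
        · exact absurd (hpre.eq_of_length (by rw [hlenT]; omega)) hnee
      have hβeq : β = S.take b := by
        have h := List.prefix_iff_eq_take.mp hpre
        rwa [List.take_take, min_eq_left hble] at h
      have hb_occ0 : OccursAt (S.take b) (S.take i) 0 := by
        rw [← hβeq]
        exact ⟨by rw [hlenT]; omega, by simpa using hpre⟩
      have hb_occq : OccursAt (S.take b) (S.take i) (i - b) := by
        rw [← hβeq]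
        obtain ⟨u, hu⟩ := hsuf
        have hul : u.length = i - b := by
          have := congrArg List.length hu
          rw [List.length_append, hlenT] at this; omega
        refine ⟨by rw [hlenT]; omega, ?_⟩
        rw [← hu, ← hul, List.drop_left]
      have hbL : b ≤ L := le_csSup (Pset_bdd h2) ⟨0, i - b, by omega, hb_occ0, hb_occq⟩
      have hmb : m < b := by
        by_contra hmb
        push_neg at hmb
        obtain ⟨p, q, hpq, hp, hq⟩ := hm_mem
        have hq1 : q + m ≤ i - 1 := by
          have := hq.1; rw [hlen m (by omega), hlen (i - 1) (by omega)] at this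
          exact this
        have hβW : β <+: S.take m := by
          rw [hβeq]; exact List.take_prefix_take_left hmb
        have hoccβ : OccursAt β (S.take i) q :=
          occ_mono' (by omega : i - 1 ≤ i) (occ_prefix' hβW hq)
        rcases hno q hoccβ with h0 | hsfx
        · omega
        · rw [hlenT] at hsfx; omega
      omega
    · have hOC : OCval S i = 0 := by rw [OCval, if_neg hcl]
      rw [hOC]
      rcases Nat.lt_or_ge m L with hlt | hge
      · exfalso
        have hLm : L = m + 1 := by omega
        have hLpos : 1 ≤ L := by omega
        obtain ⟨p, q, hpq, hp, hq⟩ := hL_mem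
        have hq1 : q + L ≤ i := by
          have := hq.1; rw [hlen L (by omega), hlenT] at this; exact this
        have hnotm : ∀ r s : ℕ, r < s → s + L ≤ i - 1 →
            OccursAt (S.take L) (S.take i) r → OccursAt (S.take L) (S.take i) s →
            False := by
          intro r s hrs hs hr' hs'
          have hmem : L ∈ Pset S (i - 1) := by
            refine ⟨r, s, hrs,
              occ_shrink' (k := i) (by omega) hr' ?_,
              occ_shrink' (k := i) (by omega) hs' ?_⟩ <;>
            · rw [hlen L (by omega), hlen (i - 1) (by omega)]; omega
          have := le_csSup (Pset_bdd hi1n) hmem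
          omega
        have hqL : q + L = i := by
          by_contra hq2
          exact hnotm p q hpq (by omega) hp hq
        apply hcl
        right
        have hUlen : (S.take L).length = L := hlen L (by omega)
        have hUpre : S.take L <+: S.take i := List.take_prefix_take_left (by omega)
        have hocc0 : OccursAt (S.take L) (S.take i) 0 :=
          ⟨by rw [hlenT, hUlen]; omega, by simpa using hUpre⟩
        have hUsuf : S.take L <:+ S.take i := by
          have hdl : ((S.take i).drop q).length = L := by
            rw [List.length_drop, hlenT]; omega
          have heq : S.take L = (S.take i).drop q :=
            hq.2.eq_of_length (by rw [hUlen, hdl])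
          rw [heq]; exact List.drop_suffix q _
        refine ⟨S.take L, ⟨?_, hUpre, hUsuf⟩, ?_⟩
        · intro h
          have := congrArg List.length h
          rw [hUlen, hlenT] at this; omega
        · intro r hr
          by_contra hcon
          push_neg at hcon
          obtain ⟨hr0, hrq⟩ := hcon
          rw [hlenT, hUlen] at hrq
          have hrlen : r + L ≤ i := by
            have := hr.1; rw [hUlen, hlenT] at this; exact this
          exact hnotm 0 r (by omega) (by omega) hocc0 hr
      · omega
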